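/- If H ⊆ 2^[n] is hereditary with nonempty union and H ≠ {∅} ∪ {{i} : i ∈ [n]}, and S is a largest star of H, then |H| < (n+1)|S|. -/

import Mathlib

open Finset

theorem card_lt_of_ne_singletons {n : ℕ}
    (H : Finset (Finset (Fin n))) (x : Fin n)
    (hH : ∀ A ∈ H, ∀ B ⊆ A, B ∈ H)
    (hU : ∃ F ∈ H, F.Nonempty)
    (hne : H ≠ insert (∅ : Finset (Fin n))
        (Finset.univ.image (fun i : Fin n => ({i} : Finset (Fin n)))))
    (hx : ∃ F ∈ H, x ∈ F)
    (hlargest : ∀ i : Fin n,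
      (H.filter (fun A => i ∈ A)).card ≤ (H.filter (fun A => x ∈ A)).card) :
    H.card < (n + 1) * (H.filter (fun A => x ∈ A)).card := by
  set s := (H.filter (fun A => x ∈ A)).card with hs
  have hs1 : 1 ≤ s := by
    obtain ⟨F, hF, hxF⟩ := hx
    exact card_pos.mpr ⟨F, mem_filter.mpr ⟨hF, hxF⟩⟩
  by_cases h2 : 2 ≤ s
  · -- double counting
    have hsum : ∑ A ∈ H, A.card = ∑ i : Fin n, (H.filter (fun A => i ∈ A)).card := by
      have h1 : ∀ A : Finset (Fin n), A.card = ∑ i : Fin n, if i ∈ A then 1 else 0 := by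
        intro A
        have h := Finset.card_filter (fun i => i ∈ A) Finset.univ
        rwa [Finset.filter_univ_mem] at h
      simp_rw [h1, Finset.card_filter]
      rw [Finset.sum_comm]
    have hne_le : (H.filter (fun A => A.Nonempty)).card ≤ ∑ A ∈ H, A.card := by
      calc (H.filter (fun A => A.Nonempty)).card
          = ∑ A ∈ H.filter (fun A => A.Nonempty), 1 := by rw [card_eq_sum_ones]
        _ ≤ ∑ A ∈ H.filter (fun A => A.Nonempty), A.card := by
            apply Finset.sum_le_sum
            intro A hA
            exact Nat.one_le_iff_ne_zero.mpr (card_ne_zero_of_mem ((mem_filter.mp hA).2).choose_spec)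
        _ ≤ ∑ A ∈ H, A.card := Finset.sum_le_sum_of_subset (filter_subset _ _)
    have hsplit : H.card ≤ 1 + (H.filter (fun A => A.Nonempty)).card := by
      have := Finset.card_filter_add_card_filter_not (s := H)
        (p := fun A => A = ∅)
      have h0 : (H.filter (fun A => A = ∅)).card ≤ 1 := by
        apply Finset.card_le_one.mpr
        intro a ha b hb
        rw [(mem_filter.mp ha).2, (mem_filter.mp hb).2]
      have heq : H.filter (fun A => ¬ A = ∅) = H.filter (fun A => A.Nonempty) := by
        apply Finset.filter_congr
        intro A _
        simp [Finset.nonempty_iff_ne_empty]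
      rw [heq] at this
      omega
    have hstar : ∑ i : Fin n, (H.filter (fun A => i ∈ A)).card ≤ n * s := by
      calc ∑ i : Fin n, (H.filter (fun A => i ∈ A)).card
          ≤ ∑ _i : Fin n, s := Finset.sum_le_sum (fun i _ => hlargest i)
        _ = n * s := by simp [mul_comm]
    have : H.card ≤ 1 + n * s := by omega
    calc H.card ≤ 1 + n * s := this
      _ < s + n * s := by omega
      _ = (n + 1) * s := by ring
  · -- s = 1
    have hs_eq : s = 1 := by omega
    have hsub : H ⊆ insert (∅ : Finset (Fin n))
        (Finset.univ.image (fun i : Fin n => ({i} : Finset (Fin n)))) := by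
      intro A hA
      have hcard : A.card ≤ 1 := by
        by_contra hc
        push_neg at hc
        obtain ⟨i, hi, j, hj, hij⟩ := Finset.one_lt_card.mp hc
        have hiH : ({i} : Finset (Fin n)) ∈ H :=
          hH A hA {i} (singleton_subset_iff.mpr hi)
        have h2le : 2 ≤ (H.filter (fun A => i ∈ A)).card := by
          apply Finset.one_lt_card.mpr
          refine ⟨A, mem_filter.mpr ⟨hA, hi⟩, {i}, mem_filter.mpr ⟨hiH, mem_singleton_self i⟩, ?_⟩
          intro h
          rw [h] at hj
          exact hij (mem_singleton.mp hj).symm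
        have := hlargest i
        omega
      have : Nonempty (Fin n) := ⟨x⟩
      rcases Finset.card_le_one_iff_subset_singleton.mp hcard with ⟨a, ha⟩
      rcases Finset.subset_singleton_iff.mp ha with h | h
      · exact mem_insert.mpr (Or.inl h)
      · exact mem_insert.mpr (Or.inr (mem_image.mpr ⟨a, mem_univ a, h.symm⟩))
    have hss : H ⊂ insert (∅ : Finset (Fin n))
        (Finset.univ.image (fun i : Fin n => ({i} : Finset (Fin n)))) :=
      Finset.ssubset_iff_subset_ne.mpr ⟨hsub, hne⟩
    have hlt := Finset.card_lt_card hss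
    have hcardT : (insert (∅ : Finset (Fin n))
        (Finset.univ.image (fun i : Fin n => ({i} : Finset (Fin n))))).card = n + 1 := by
      rw [Finset.card_insert_of_notMem, Finset.card_image_of_injective _
        (fun a b h => Finset.singleton_injective h), Finset.card_univ, Fintype.card_fin]
      simp
    rw [hs_eq, mul_one]
    omega
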